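/- Let y = xβ₀ + e with x ~ N(0, Σ) (Σ > 0) and e ~ N(0, σ²) independent, let α ∈ (0, 1) and λ ≥ 0. Let q_α = Φ⁻¹((α + 1)/2), c₁ = α − 2q_α·φ(q_α), where Φ and φ are the standard normal cdf and density. For each β ∈ ℝ let q_β denote the α-quantile of |y − xβ|. Then the sparse LTS objective β ↦ E[(y − xβ)²·1{|y − xβ| ≤ q_β}] + αλ|β| is minimized at β = sign(β₀)·max(|β₀| − αλ/(2c₁Σ), 0). -/

import Mathlib

open MeasureTheory ProbabilityTheory
open scoped NNReal

open Real Set intervalIntegral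
open scoped ENNReal

lemma pdf_conv_identity (v1 v2 : ℝ≥0) (h1 : v1 ≠ 0) (h2 : v2 ≠ 0) (s x : ℝ) :
    gaussianPDFReal 0 v1 x * gaussianPDFReal 0 v2 (s - x)
      = gaussianPDFReal 0 (v1 + v2) s *
        gaussianPDFReal (s * v1 / (v1 + v2)) (v1 * v2 / (v1 + v2)) x := by
  have hv1 : (0:ℝ) < v1 := lt_of_le_of_ne (v1.coe_nonneg) (by exact_mod_cast (Ne.symm h1))
  have hv2 : (0:ℝ) < v2 := lt_of_le_of_ne (v2.coe_nonneg) (by exact_mod_cast (Ne.symm h2))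
  have hv12 : (0:ℝ) < (v1:ℝ) + v2 := by linarith
  have hcast : ((v1 * v2 / (v1 + v2) : ℝ≥0) : ℝ) = (v1:ℝ) * v2 / ((v1:ℝ) + v2) := by
    push_cast; ring
  simp only [gaussianPDFReal, NNReal.coe_add, hcast, sub_zero]
  rw [mul_mul_mul_comm, ← Real.exp_add, mul_mul_mul_comm, ← Real.exp_add]
  congr 1
  · rw [← mul_inv, ← mul_inv, ← Real.sqrt_mul (by positivity), ← Real.sqrt_mul (by positivity)]
    congr 1
    field_simp
  · congr 1
    field_simp
    ring

lemma gaussian_conv (v1 v2 : ℝ≥0) :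
    ((gaussianReal 0 v1).prod (gaussianReal 0 v2)).map (fun p : ℝ × ℝ => p.1 + p.2)
      = gaussianReal 0 (v1 + v2) := by
  by_cases h1 : v1 = 0
  · subst h1
    rw [gaussianReal_zero_var, Measure.dirac_prod, Measure.map_map measurable_add measurable_prodMk_left]
    simp only [zero_add]
    have : ((fun p : ℝ × ℝ => p.1 + p.2) ∘ Prod.mk (0:ℝ)) = fun b : ℝ => (0:ℝ) + b := rfl
    rw [this]
    simpa using gaussianReal_map_const_add (μ := 0) (v := v2) 0
  by_cases h2 : v2 = 0
  · subst h2
    rw [gaussianReal_zero_var, Measure.prod_dirac, Measure.map_map measurable_add measurable_prodMk_right]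
    have : ((fun p : ℝ × ℝ => p.1 + p.2) ∘ (fun a : ℝ => (a, (0:ℝ)))) = fun a : ℝ => a + (0:ℝ) := rfl
    rw [this]
    simpa using gaussianReal_map_add_const (μ := 0) (v := v1) 0
  -- main case
  have h12 : v1 + v2 ≠ 0 := by
    intro h; exact h1 (by simpa using (add_eq_zero.mp h).1)
  have hv' : v1 * v2 / (v1 + v2) ≠ 0 := by
    rw [div_ne_zero_iff]
    exact ⟨mul_ne_zero h1 h2, h12⟩
  ext s hs
  rw [Measure.map_apply measurable_add hs, Measure.prod_apply (measurable_add hs)]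
  have hstep : ∀ a : ℝ, (gaussianReal 0 v2) (Prod.mk a ⁻¹' ((fun p : ℝ × ℝ => p.1 + p.2) ⁻¹' s))
      = ∫⁻ t in s, gaussianPDF a v2 t := by
    intro a
    have : Prod.mk a ⁻¹' ((fun p : ℝ × ℝ => p.1 + p.2) ⁻¹' s) = (fun b => a + b) ⁻¹' s := rfl
    rw [this, ← Measure.map_apply (measurable_const_add a) hs, gaussianReal_map_const_add,
      zero_add, gaussianReal_apply _ h2]
  simp_rw [hstep]
  have hmeas : Measurable (Function.uncurry fun (a t : ℝ) => gaussianPDF a v2 t) := by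
    have : (Function.uncurry fun (a t : ℝ) => gaussianPDF a v2 t)
        = fun p : ℝ × ℝ => ENNReal.ofReal (gaussianPDFReal 0 v2 (p.2 - p.1)) := by
      ext p
      simp only [Function.uncurry, gaussianPDF]
      rw [gaussianPDFReal_sub, zero_add]
    rw [this]
    exact ((measurable_gaussianPDFReal 0 v2).comp (measurable_snd.sub measurable_fst)).ennreal_ofReal
  rw [gaussianReal_of_var_ne_zero _ h1, lintegral_withDensity_eq_lintegral_mul _ (measurable_gaussianPDF _ _)
    (hmeas.lintegral_prod_right)]
  simp only [Pi.mul_apply]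
  have hpull : ∀ a : ℝ, gaussianPDF 0 v1 a * ∫⁻ t in s, gaussianPDF a v2 t
      = ∫⁻ t in s, gaussianPDF 0 v1 a * gaussianPDF a v2 t := by
    intro a
    rw [lintegral_const_mul _ (measurable_gaussianPDF _ _)]
  simp_rw [hpull]
  rw [lintegral_lintegral_swap]
  swap
  · have : Measurable (Function.uncurry fun (a t : ℝ) => gaussianPDF 0 v1 a * gaussianPDF a v2 t) :=
      ((measurable_gaussianPDF 0 v1).comp measurable_fst).mul hmeas
    exact this.aemeasurable
  have hinner : ∀ t : ℝ, (∫⁻ a, gaussianPDF 0 v1 a * gaussianPDF a v2 t)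
      = gaussianPDF 0 (v1 + v2) t := by
    intro t
    have : ∀ a : ℝ, gaussianPDF 0 v1 a * gaussianPDF a v2 t
        = ENNReal.ofReal (gaussianPDFReal 0 (v1 + v2) t)
          * ENNReal.ofReal (gaussianPDFReal (t * v1 / (v1 + v2)) (v1 * v2 / (v1 + v2)) a) := by
      intro a
      rw [gaussianPDF, gaussianPDF, ← ENNReal.ofReal_mul (gaussianPDFReal_nonneg _ _ _),
        ← ENNReal.ofReal_mul (gaussianPDFReal_nonneg _ _ _)]
      congr 1
      have := pdf_conv_identity v1 v2 h1 h2 t a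
      rw [← this]
      congr 1
      rw [gaussianPDFReal_sub, zero_add]
    simp_rw [this]
    rw [lintegral_const_mul _ (measurable_gaussianPDFReal _ _).ennreal_ofReal,
      lintegral_gaussianPDFReal_eq_one _ hv', mul_one, gaussianPDF]
  simp_rw [hinner]
  rw [gaussianReal_apply _ h12 s]

lemma std_map_neg : (gaussianReal 0 1).map (fun u : ℝ => -u) = gaussianReal 0 1 := by
  have h := gaussianReal_map_const_mul (μ := 0) (v := 1) (-1)
  have h2 : (NNReal.mk ((-1:ℝ)^2) (sq_nonneg _)) * 1 = 1 := by ext; norm_num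
  rw [h2, mul_zero] at h
  simp only [neg_one_mul] at h
  exact h

lemma std_singleton (a : ℝ) : (gaussianReal 0 1) {a} = 0 :=
  gaussianReal_absolutelyContinuous 0 one_ne_zero (measure_singleton a)

lemma std_Ioc_pos {a b : ℝ} (hab : a < b) : 0 < (gaussianReal 0 1) (Ioc a b) := by
  rcases (zero_le : 0 ≤ (gaussianReal 0 1) (Ioc a b)).eq_or_lt with h | h
  · exfalso
    have := gaussianReal_absolutelyContinuous' 0 one_ne_zero h.symm
    rw [Real.volume_Ioc] at this
    simp only [ENNReal.ofReal_eq_zero, sub_nonpos] at this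
    linarith
  · exact h

lemma std_Iic_lt {a b : ℝ} (hab : a < b) :
    ((gaussianReal 0 1) (Iic a)).toReal < ((gaussianReal 0 1) (Iic b)).toReal := by
  have h : (gaussianReal 0 1) (Iic b) = (gaussianReal 0 1) (Iic a) + (gaussianReal 0 1) (Ioc a b) := by
    rw [← measure_union (Set.Iic_disjoint_Ioc le_rfl) measurableSet_Ioc, Iic_union_Ioc_eq_Iic hab.le]
  rw [h, ENNReal.toReal_add (measure_ne_top _ _) (measure_ne_top _ _)]
  have hne : ((gaussianReal 0 1) (Ioc a b)).toReal > 0 :=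
    ENNReal.toReal_pos (std_Ioc_pos hab).ne' (measure_ne_top _ _)
  linarith

lemma std_Iic_mono : Monotone (fun t : ℝ => ((gaussianReal 0 1) (Iic t)).toReal) := by
  intro a b hab
  rcases hab.eq_or_lt with rfl | h
  · exact le_refl _
  · exact (std_Iic_lt h).le

lemma std_Iic_neg (t : ℝ) :
    (gaussianReal 0 1) (Iic (-t)) = (gaussianReal 0 1) (Ici t) := by
  conv_lhs => rw [← std_map_neg]
  rw [Measure.map_apply measurable_neg measurableSet_Iic]
  congr 1
  ext u
  simp only [mem_preimage, mem_Iic, mem_Ici]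
  constructor <;> intro h <;> linarith

lemma std_Iic_add_Ici (t : ℝ) :
    ((gaussianReal 0 1) (Iic t)).toReal + ((gaussianReal 0 1) (Ici t)).toReal = 1 := by
  have h := measure_union_add_inter (μ := gaussianReal 0 1) (Iic t) (measurableSet_Ici (a := t))
  rw [Iic_union_Ici, Iic_inter_Ici, Icc_self, std_singleton, add_zero, measure_univ] at h
  have := congrArg ENNReal.toReal h
  rw [ENNReal.toReal_one, ENNReal.toReal_add (measure_ne_top _ _) (measure_ne_top _ _)] at this
  linarith [this]

lemma std_Iic_zero : ((gaussianReal 0 1) (Iic (0:ℝ))).toReal = 1 / 2 := by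
  have h := std_Iic_add_Ici 0
  have h2 : (gaussianReal 0 1) (Ici (0:ℝ)) = (gaussianReal 0 1) (Iic (0:ℝ)) := by
    rw [← std_Iic_neg, neg_zero]
  rw [h2] at h
  linarith

lemma std_abs_toReal {t : ℝ} (ht : 0 ≤ t) :
    ((gaussianReal 0 1) {u : ℝ | |u| ≤ t}).toReal
      = 2 * ((gaussianReal 0 1) (Iic t)).toReal - 1 := by
  have hsplit : (gaussianReal 0 1) (Iic t)
      = (gaussianReal 0 1) {u : ℝ | |u| ≤ t} + (gaussianReal 0 1) (Iio (-t)) := by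
    rw [← measure_union ?_ measurableSet_Iio]
    · congr 1
      ext u
      simp only [mem_Iic, mem_union, mem_setOf_eq, abs_le, mem_Iio]
      constructor
      · intro h
        by_cases hu : -t ≤ u
        · exact Or.inl ⟨hu, h⟩
        · exact Or.inr (by linarith [not_le.mp hu])
      · rintro (⟨h1, h2⟩ | h) <;> linarith
    · rw [Set.disjoint_left]
      intro u hu hu2
      simp only [mem_setOf_eq, abs_le] at hu
      simp only [mem_Iio] at hu2
      linarith [hu.1]
  have hIio : (gaussianReal 0 1) (Iio (-t)) = (gaussianReal 0 1) (Ici t) := by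
    rw [← Iic_diff_right, measure_diff_null (std_singleton _), std_Iic_neg]
  have h1 := congrArg ENNReal.toReal hsplit
  rw [ENNReal.toReal_add (measure_ne_top _ _) (measure_ne_top _ _), hIio] at h1
  have h2 := std_Iic_add_Ici t
  linarith

lemma std_pdf_eq (u : ℝ) : gaussianPDFReal 0 1 u = (√(2*π))⁻¹ * rexp (-u^2/2) := by
  simp [gaussianPDFReal]

lemma std_pdf_even (u : ℝ) : gaussianPDFReal 0 1 (-u) = gaussianPDFReal 0 1 u := by
  rw [std_pdf_eq, std_pdf_eq]
  ring_nf

lemma std_pdf_cont : Continuous (gaussianPDFReal 0 1) := by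
  have : gaussianPDFReal 0 1 = fun u => (√(2*π))⁻¹ * rexp (-u^2/2) := funext std_pdf_eq
  rw [this]
  fun_prop

lemma std_pdf_hasDeriv (u : ℝ) :
    HasDerivAt (gaussianPDFReal 0 1) (-u * gaussianPDFReal 0 1 u) u := by
  have h : gaussianPDFReal 0 1 = fun u => (√(2*π))⁻¹ * rexp (-u^2/2) := funext std_pdf_eq
  rw [h]
  have h1 : HasDerivAt (fun u : ℝ => -u^2/2) (-u) u := by
    have := ((hasDerivAt_pow 2 u).neg).div_const 2
    refine this.congr_deriv ?_
    push_cast; ring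
  have h2 := (h1.exp).const_mul (√(2*π))⁻¹
  refine h2.congr_deriv ?_
  beta_reduce
  ring

lemma std_F_hasDeriv (u : ℝ) :
    HasDerivAt (fun u : ℝ => (∫ t in (0:ℝ)..u, gaussianPDFReal 0 1 t) - u * gaussianPDFReal 0 1 u)
      (u^2 * gaussianPDFReal 0 1 u) u := by
  have h1 : HasDerivAt (fun u : ℝ => ∫ t in (0:ℝ)..u, gaussianPDFReal 0 1 t)
      (gaussianPDFReal 0 1 u) u :=
    (std_pdf_cont.integral_hasStrictDerivAt 0 u).hasDerivAt
  have h2 : HasDerivAt (fun u : ℝ => u * gaussianPDFReal 0 1 u)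
      (gaussianPDFReal 0 1 u + u * (-u * gaussianPDFReal 0 1 u)) u := by
    have := (hasDerivAt_id u).mul (std_pdf_hasDeriv u)
    exact this.congr_deriv (by simp)
  refine (h1.sub h2).congr_deriv ?_
  ring

lemma trunc_moment_eq {b : ℝ} (hb : 0 ≤ b) :
    ∫ u in (-b)..b, u^2 * gaussianPDFReal 0 1 u
      = (∫ u in (-b)..b, gaussianPDFReal 0 1 u) - 2 * b * gaussianPDFReal 0 1 b := by
  have hderiv : ∀ u ∈ Set.uIcc (-b) b,
      HasDerivAt (fun u : ℝ => (∫ t in (0:ℝ)..u, gaussianPDFReal 0 1 t) - u * gaussianPDFReal 0 1 u)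
        (u^2 * gaussianPDFReal 0 1 u) u := fun u _ => std_F_hasDeriv u
  have hint : IntervalIntegrable (fun u : ℝ => u^2 * gaussianPDFReal 0 1 u) volume (-b) b :=
    (((continuous_pow 2).mul std_pdf_cont).intervalIntegrable _ _)
  rw [intervalIntegral.integral_eq_sub_of_hasDerivAt hderiv hint]
  have hsplit : (∫ t in (0:ℝ)..b, gaussianPDFReal 0 1 t) - (∫ t in (0:ℝ)..(-b), gaussianPDFReal 0 1 t)
      = ∫ t in (-b)..b, gaussianPDFReal 0 1 t := by
    rw [← intervalIntegral.integral_add_adjacent_intervals (a := -b) (b := 0) (c := b)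
      ((integrable_gaussianPDFReal 0 1).intervalIntegrable)
      ((integrable_gaussianPDFReal 0 1).intervalIntegrable)]
    rw [intervalIntegral.integral_symm (-b) 0]
    ring
  rw [std_pdf_even] at *
  ring_nf
  ring_nf at hsplit
  linarith [hsplit]

lemma trunc_moment_pos {b : ℝ} (hb : 0 < b) :
    0 < ∫ u in (-b)..b, u^2 * gaussianPDFReal 0 1 u := by
  have hcont : Continuous (fun u : ℝ => u^2 * gaussianPDFReal 0 1 u) :=
    (continuous_pow 2).mul std_pdf_cont
  have hsplit := intervalIntegral.integral_add_adjacent_intervals (μ := volume)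
    (a := -b) (b := b/2) (c := b)
    (hcont.intervalIntegrable _ _) (hcont.intervalIntegrable _ _)
  have h1 : 0 ≤ ∫ u in (-b)..(b/2), u^2 * gaussianPDFReal 0 1 u :=
    intervalIntegral.integral_nonneg (by linarith)
      (fun u _ => mul_nonneg (sq_nonneg u) (gaussianPDFReal_nonneg _ _ _))
  have h2 : 0 < ∫ u in (b/2)..b, u^2 * gaussianPDFReal 0 1 u := by
    apply intervalIntegral.intervalIntegral_pos_of_pos_on
      (hcont.intervalIntegrable (b/2) b)
    · intro u hu
      have hu1 : 0 < u := lt_trans (by linarith) hu.1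
      exact mul_pos (pow_pos hu1 2) (gaussianPDFReal_pos _ _ _ one_ne_zero)
    · linarith
  linarith [hsplit]

lemma abs_set_meas (t : ℝ) : MeasurableSet {u : ℝ | |u| ≤ t} :=
  measurableSet_le (by fun_prop) measurable_const

lemma std_abs_measure_eq_intervalIntegral {b : ℝ} (hb : 0 ≤ b) :
    ((gaussianReal 0 1) {u : ℝ | |u| ≤ b}).toReal = ∫ u in (-b)..b, gaussianPDFReal 0 1 u := by
  have hset : {u : ℝ | |u| ≤ b} = Icc (-b) b := by
    ext u; simp [abs_le]
  rw [hset, gaussianReal_apply_eq_integral 0 one_ne_zero,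
    ENNReal.toReal_ofReal (setIntegral_nonneg measurableSet_Icc
      (fun u _ => gaussianPDFReal_nonneg _ _ _))]
  rw [integral_Icc_eq_integral_Ioc, ← intervalIntegral.integral_of_le (by linarith)]

lemma std_trunc_integral_eq {b : ℝ} (hb : 0 ≤ b) :
    ∫ v, (if |v| ≤ b then v^2 else 0) ∂(gaussianReal 0 1)
      = ∫ u in (-b)..b, u^2 * gaussianPDFReal 0 1 u := by
  rw [gaussianReal_of_var_ne_zero 0 one_ne_zero]
  have hpdf : (gaussianPDF 0 1) = fun a => ((Real.toNNReal (gaussianPDFReal 0 1 a) : ℝ≥0) : ℝ≥0∞) := by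
    ext a
    rw [gaussianPDF, ENNReal.ofReal]
  rw [hpdf, integral_withDensity_eq_integral_smul
    ((measurable_gaussianPDFReal 0 1).real_toNNReal)]
  have : ∀ a : ℝ, (Real.toNNReal (gaussianPDFReal 0 1 a)) • (if |a| ≤ b then a^2 else 0)
      = Set.indicator (Icc (-b) b) (fun u => u^2 * gaussianPDFReal 0 1 u) a := by
    intro a
    rw [NNReal.smul_def, Real.coe_toNNReal _ (gaussianPDFReal_nonneg _ _ _)]
    by_cases h : |a| ≤ b
    · rw [if_pos h, Set.indicator_of_mem (by simpa [abs_le] using h)]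
      rw [smul_eq_mul]; ring
    · rw [if_neg h, Set.indicator_of_notMem (by simpa [abs_le] using h)]
      rw [smul_eq_mul]; ring
  simp_rw [this]
  rw [MeasureTheory.integral_indicator measurableSet_Icc, integral_Icc_eq_integral_Ioc,
    ← intervalIntegral.integral_of_le (by linarith)]

lemma gaussian_scale {s : ℝ} (hs : 0 < s) (τ : ℝ≥0) (hτ : (τ : ℝ) = s^2) :
    (gaussianReal 0 1).map (fun v => s * v) = gaussianReal 0 τ := by
  rw [gaussianReal_map_const_mul, mul_zero]
  congr 1
  ext
  simp [hτ]

lemma scaled_abs_measure {s : ℝ} (hs : 0 < s) (τ : ℝ≥0) (hτ : (τ : ℝ) = s^2) (t : ℝ) :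
    gaussianReal 0 τ {u : ℝ | |u| ≤ t} = (gaussianReal 0 1) {v : ℝ | |v| ≤ t / s} := by
  rw [← gaussian_scale hs τ hτ, Measure.map_apply (measurable_const_mul s) (abs_set_meas t)]
  congr 1
  ext v
  simp only [mem_preimage, mem_setOf_eq, abs_mul, abs_of_pos hs]
  rw [le_div_iff₀ hs, mul_comm]

lemma scaled_trunc_integral {s : ℝ} (hs : 0 < s) (τ : ℝ≥0) (hτ : (τ : ℝ) = s^2) (b : ℝ) (hb : 0 ≤ b) :
    ∫ u, (if |u| ≤ s * b then u^2 else 0) ∂(gaussianReal 0 τ)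
      = s^2 * ∫ v, (if |v| ≤ b then v^2 else 0) ∂(gaussianReal 0 1) := by
  rw [← gaussian_scale hs τ hτ]
  rw [integral_map (measurable_const_mul s).aemeasurable]
  swap
  · apply Measurable.aestronglyMeasurable
    apply Measurable.ite (abs_set_meas (s * b)) (by fun_prop) measurable_const
  have : ∀ v : ℝ, (if |s * v| ≤ s * b then (s * v)^2 else 0)
      = s^2 * (if |v| ≤ b then v^2 else 0) := by
    intro v
    have habs : |s * v| ≤ s * b ↔ |v| ≤ b := by
      rw [abs_mul, abs_of_pos hs]
      constructor
      · intro h; exact le_of_mul_le_mul_left h hs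
      · intro h; exact mul_le_mul_of_nonneg_left h hs.le
    by_cases h : |v| ≤ b
    · rw [if_pos (habs.mpr h), if_pos h]; ring
    · rw [if_neg (fun hc => h (habs.mp hc)), if_neg h]; ring
  simp_rw [this]
  rw [MeasureTheory.integral_const_mul]


lemma quantile_scaled {α qα : ℝ} (hα0 : 0 < α) (hqα : 0 < qα)
    (heq : (gaussianReal 0 1) {u : ℝ | |u| ≤ qα} = ENNReal.ofReal α)
    (hstrict : ∀ t : ℝ, 0 ≤ t → t < qα → ((gaussianReal 0 1) {u : ℝ | |u| ≤ t}).toReal < α)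
    {s : ℝ} (hs : 0 < s) (τ : ℝ≥0) (hτ : (τ : ℝ) = s^2) :
    sInf {t : ℝ | ENNReal.ofReal α ≤ gaussianReal 0 τ {u : ℝ | |u| ≤ t}} = s * qα := by
  have hset : {t : ℝ | ENNReal.ofReal α ≤ gaussianReal 0 τ {u : ℝ | |u| ≤ t}} = Ici (s * qα) := by
    ext t
    simp only [mem_setOf_eq, mem_Ici]
    rw [scaled_abs_measure hs τ hτ]
    constructor
    · intro h
      by_contra hlt
      push_neg at hlt
      rcases lt_or_ge t 0 with ht | ht
      · have hempty : {v : ℝ | |v| ≤ t / s} = ∅ := by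
          ext v
          simp only [mem_setOf_eq, mem_empty_iff_false, iff_false, not_le]
          calc t / s < 0 := div_neg_of_neg_of_pos ht hs
          _ ≤ |v| := abs_nonneg v
        rw [hempty] at h
        simp only [measure_empty, nonpos_iff_eq_zero, ENNReal.ofReal_eq_zero] at h
        linarith
      · have h1 : t / s < qα := by
          rw [div_lt_iff₀ hs]
          linarith [hlt]
        have h2 := hstrict (t / s) (div_nonneg ht hs.le) h1
        have h3 : (gaussianReal 0 1) {v : ℝ | |v| ≤ t / s} < ENNReal.ofReal α := by
          rw [ENNReal.lt_ofReal_iff_toReal_lt (measure_ne_top (gaussianReal 0 1) _)]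
          exact h2
        exact absurd h (not_le.mpr h3)
    · intro h
      rw [← heq]
      apply measure_mono
      intro v hv
      simp only [mem_setOf_eq] at *
      calc |v| ≤ qα := hv
      _ ≤ t / s := by rw [le_div_iff₀ hs]; nlinarith [h]
  rw [hset, csInf_Ici]

lemma quantile_dirac {α : ℝ} (hα0 : 0 < α) (hα1 : α ≤ 1) :
    sInf {t : ℝ | ENNReal.ofReal α ≤ gaussianReal 0 0 {u : ℝ | |u| ≤ t}} = 0 := by
  rw [gaussianReal_zero_var]
  have hset : {t : ℝ | ENNReal.ofReal α ≤ Measure.dirac 0 {u : ℝ | |u| ≤ t}} = Ici (0:ℝ) := by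
    ext t
    simp only [mem_setOf_eq, mem_Ici]
    rw [Measure.dirac_apply' 0 (abs_set_meas t)]
    constructor
    · intro h
      by_contra ht
      push_neg at ht
      have : (0:ℝ) ∉ {u : ℝ | |u| ≤ t} := by
        simp only [mem_setOf_eq, abs_zero, not_le]; exact ht
      rw [Set.indicator_of_notMem this] at h
      simp only [nonpos_iff_eq_zero, ENNReal.ofReal_eq_zero] at h
      linarith
    · intro ht
      have : (0:ℝ) ∈ {u : ℝ | |u| ≤ t} := by simpa using ht
      rw [Set.indicator_of_mem this]
      simp only [Pi.one_apply]
      calc ENNReal.ofReal α ≤ ENNReal.ofReal 1 := ENNReal.ofReal_le_ofReal hα1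
      _ = 1 := ENNReal.ofReal_one
  rw [hset, csInf_Ici]

lemma soft_threshold {a b : ℝ} (ha : 0 < a) (hb : 0 ≤ b) (β₀ β : ℝ) :
    a * (Real.sign β₀ * max (|β₀| - b / (2 * a)) 0 - β₀)^2
        + b * |Real.sign β₀ * max (|β₀| - b / (2 * a)) 0|
      ≤ a * (β - β₀)^2 + b * |β| := by
  set t := b / (2 * a) with ht
  have ht0 : 0 ≤ t := div_nonneg hb (by linarith)
  have hbt : b = 2 * a * t := by
    rw [ht, mul_div_cancel₀]
    positivity
  rw [hbt]
  rcases lt_trichotomy β₀ 0 with h0 | h0 | h0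
  · rw [Real.sign_of_neg h0, abs_of_neg h0]
    by_cases hcase : -β₀ - t ≤ 0
    · rw [max_eq_right hcase]
      simp only [mul_zero, zero_sub, abs_zero, add_zero]
      nlinarith [mul_nonneg ha.le (sq_nonneg β),
        mul_nonneg (mul_nonneg ha.le (abs_nonneg β)) (by linarith : (0:ℝ) ≤ t + β₀),
        mul_nonneg (mul_nonneg ha.le (by linarith : (0:ℝ) ≤ -β₀))
          (by linarith [neg_abs_le β] : (0:ℝ) ≤ |β| + β)]
    · push_neg at hcase
      rw [max_eq_left (by linarith)]
      have hstar : (-1 : ℝ) * (-β₀ - t) = β₀ + t := by ring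
      rw [hstar]
      have habs : |β₀ + t| = -β₀ - t := by
        rw [abs_of_neg (by linarith)]; ring
      rw [habs]
      nlinarith [mul_nonneg ha.le (sq_nonneg (β - β₀ - t)),
        mul_nonneg (mul_nonneg ha.le ht0) (by linarith [neg_abs_le β] : (0:ℝ) ≤ |β| + β)]
  · subst h0
    simp only [Real.sign_zero, zero_mul, abs_zero, mul_zero, add_zero, zero_sub]
    nlinarith [mul_nonneg ha.le (sq_nonneg β), mul_nonneg (mul_nonneg (by linarith : (0:ℝ) ≤ 2*a) ht0) (abs_nonneg β)]
  · rw [Real.sign_of_pos h0, abs_of_pos h0, one_mul]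
    by_cases hcase : β₀ - t ≤ 0
    · rw [max_eq_right hcase]
      simp only [abs_zero, mul_zero, add_zero, zero_sub]
      nlinarith [mul_nonneg ha.le (sq_nonneg β),
        mul_nonneg (mul_nonneg ha.le (abs_nonneg β)) (by linarith : (0:ℝ) ≤ t - β₀),
        mul_nonneg (mul_nonneg ha.le h0.le)
          (by linarith [le_abs_self β] : (0:ℝ) ≤ |β| - β)]
    · push_neg at hcase
      rw [max_eq_left (by linarith)]
      have habs : |β₀ - t| = β₀ - t := abs_of_pos (by linarith)
      rw [habs]
      nlinarith [mul_nonneg ha.le (sq_nonneg (β - β₀ + t)),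
        mul_nonneg (mul_nonneg ha.le ht0) (by linarith [le_abs_self β] : (0:ℝ) ≤ |β| - β)]
lemma residual_dist {Ω : Type*} [MeasurableSpace Ω] (μ : Measure Ω) [IsProbabilityMeasure μ]
    (x e : Ω → ℝ) (hxm : Measurable x) (hem : Measurable e)
    (V σ2 : ℝ≥0)
    (hx : μ.map x = gaussianReal 0 V) (he : μ.map e = gaussianReal 0 σ2)
    (hind : IndepFun x e μ) (c : ℝ) :
    μ.map (fun ω => c * x ω + e ω) = gaussianReal 0 (⟨c ^ 2, sq_nonneg c⟩ * V + σ2) := by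
  have hprod : μ.map (fun ω => (x ω, e ω)) = (μ.map x).prod (μ.map e) :=
    (indepFun_iff_map_prod_eq_prod_map_map hxm.aemeasurable hem.aemeasurable).mp hind
  have hcomp : (fun ω => c * x ω + e ω)
      = (fun p : ℝ × ℝ => p.1 + p.2) ∘ (Prod.map (fun a => c * a) id) ∘ (fun ω => (x ω, e ω)) := rfl
  rw [hcomp, ← Function.comp_assoc]
  rw [← Measure.map_map (measurable_add.comp ((measurable_const_mul c).prodMap measurable_id))
    (hxm.prodMk hem), hprod]
  rw [← Measure.map_map measurable_add ((measurable_const_mul c).prodMap measurable_id)]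
  rw [← Measure.map_prod_map _ _ (measurable_const_mul c) measurable_id, Measure.map_id]
  rw [hx, he]
  have : (gaussianReal 0 V).map (fun a => c * a) = gaussianReal 0 (⟨c ^ 2, sq_nonneg c⟩ * V) := by
    have h := gaussianReal_map_const_mul (μ := 0) (v := V) c
    rw [mul_zero] at h
    exact h
  rw [this, gaussian_conv]


/-- Lemma 1 of the paper: explicit solution of the sparse LTS functional
in simple regression with normal predictor and error: the sparse LTS objective
`β ↦ E[(y - xβ)²·1{|y - xβ| ≤ q_β}] + αλ|β|` (with `q_β` the α-quantile of `|y - xβ|`)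
is minimized at `β = sign(β₀)·max(|β₀| - αλ/(2c₁Σ), 0)`. -/
theorem sparse_LTS_explicit_solution
    {Ω : Type*} [MeasurableSpace Ω] (μ : Measure Ω) [IsProbabilityMeasure μ]
    (x e : Ω → ℝ) (hxm : Measurable x) (hem : Measurable e)
    (V σ2 : ℝ≥0) (hV : 0 < V)
    (hx : μ.map x = gaussianReal 0 V) (he : μ.map e = gaussianReal 0 σ2)
    (hind : IndepFun x e μ)
    (β₀ : ℝ) (y : Ω → ℝ) (hy : ∀ ω, y ω = x ω * β₀ + e ω)
    (α lam : ℝ) (hα : α ∈ Set.Ioo (0 : ℝ) 1) (hlam : 0 ≤ lam)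
    (qα : ℝ) (hqα : ((gaussianReal 0 1) (Set.Iic qα)).toReal = (α + 1) / 2)
    (c₁ : ℝ) (hc₁ : c₁ = α - 2 * qα * gaussianPDFReal 0 1 qα)
    (q : ℝ → ℝ)
    (hq : ∀ β : ℝ, q β = sInf {t : ℝ | ENNReal.ofReal α ≤ μ {ω | |y ω - x ω * β| ≤ t}})
    (f : ℝ → ℝ)
    (hf : ∀ β : ℝ, f β =
      (∫ ω, (if |y ω - x ω * β| ≤ q β then (y ω - x ω * β) ^ 2 else 0) ∂μ)
        + α * lam * |β|) :
    ∀ β : ℝ, f (Real.sign β₀ * max (|β₀| - α * lam / (2 * c₁ * (V : ℝ))) 0) ≤ f β := by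
  obtain ⟨hα0, hα1⟩ := hα
  -- qα is positive
  have hqαpos : 0 < qα := by
    by_contra hcon
    push_neg at hcon
    have hmono := std_Iic_mono hcon
    simp only at hmono
    rw [hqα, std_Iic_zero] at hmono
    linarith
  -- standard normal abs measure at qα equals α
  have habsqα : ((gaussianReal 0 1) {u : ℝ | |u| ≤ qα}).toReal = α := by
    rw [std_abs_toReal hqαpos.le, hqα]; ring
  have habsqα' : (gaussianReal 0 1) {u : ℝ | |u| ≤ qα} = ENNReal.ofReal α := by
    rw [← habsqα, ENNReal.ofReal_toReal (measure_ne_top _ _)]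
  have hstrict : ∀ t : ℝ, 0 ≤ t → t < qα → ((gaussianReal 0 1) {u : ℝ | |u| ≤ t}).toReal < α := by
    intro t ht htq
    rw [std_abs_toReal ht]
    have := std_Iic_lt htq
    rw [hqα] at this
    linarith
  -- c₁ equals the truncated second moment
  have hc₁int : c₁ = ∫ v, (if |v| ≤ qα then v^2 else 0) ∂(gaussianReal 0 1) := by
    rw [std_trunc_integral_eq hqαpos.le, trunc_moment_eq hqαpos.le,
      ← std_abs_measure_eq_intervalIntegral hqαpos.le, habsqα, hc₁]
  have hc₁pos : 0 < c₁ := by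
    rw [hc₁int, std_trunc_integral_eq hqαpos.le]
    exact trunc_moment_pos hqαpos
  -- key: explicit form of f
  have key : ∀ β : ℝ, f β = c₁ * ((β₀ - β)^2 * (V:ℝ) + (σ2:ℝ)) + α * lam * |β| := by
    intro β
    set c : ℝ := β₀ - β with hc
    set τ : ℝ≥0 := ⟨c^2, sq_nonneg c⟩ * V + σ2 with hτdef
    have hτcoe : (τ : ℝ) = c^2 * (V:ℝ) + (σ2:ℝ) := by
      rw [hτdef]
      push_cast
      rfl
    have hrfun : (fun ω => y ω - x ω * β) = fun ω => c * x ω + e ω := by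
      funext ω
      rw [hy ω, hc]
      ring
    have hrm : Measurable (fun ω => y ω - x ω * β) := by
      rw [hrfun]
      exact (hxm.const_mul c).add hem
    have hmap : μ.map (fun ω => y ω - x ω * β) = gaussianReal 0 τ := by
      rw [hrfun, hτdef]
      exact residual_dist μ x e hxm hem V σ2 hx he hind c
    have hsets : ∀ t : ℝ, μ {ω | |y ω - x ω * β| ≤ t} = gaussianReal 0 τ {u : ℝ | |u| ≤ t} := by
      intro t
      rw [← hmap, Measure.map_apply hrm (abs_set_meas t)]
      rfl
    by_cases hτ0 : τ = 0
    · -- degenerate case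
      have hqβ : q β = 0 := by
        rw [hq β]
        simp_rw [hsets, hτ0]
        exact quantile_dirac hα0 hα1.le
      have hint : (∫ ω, (if |y ω - x ω * β| ≤ q β then (y ω - x ω * β) ^ 2 else 0) ∂μ) = 0 := by
        have hgm : Measurable (fun u : ℝ => if |u| ≤ q β then u ^ 2 else 0) :=
          Measurable.ite (abs_set_meas (q β)) (by fun_prop) measurable_const
        have := integral_map (μ := μ) (φ := fun ω => y ω - x ω * β) (f := fun u : ℝ => if |u| ≤ q β then u ^ 2 else 0)
          hrm.aemeasurable (hgm.aestronglyMeasurable)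
        rw [← this, hmap, hτ0, gaussianReal_zero_var, integral_dirac]
        simp
      rw [hf β, hint]
      have hτr : c^2 * (V:ℝ) + (σ2:ℝ) = 0 := by
        rw [← hτcoe, hτ0]
        simp
      rw [hτr]
      ring
    · -- nondegenerate case
      set s : ℝ := Real.sqrt τ with hsdef
      have hτpos : (0:ℝ) < τ := by
        have := (zero_le : 0 ≤ τ).lt_of_ne (Ne.symm hτ0)
        exact_mod_cast this
      have hs : 0 < s := Real.sqrt_pos.mpr hτpos
      have hτs : (τ : ℝ) = s^2 := (Real.sq_sqrt hτpos.le).symm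
      have hqβ : q β = s * qα := by
        rw [hq β]
        simp_rw [hsets]
        exact quantile_scaled hα0 hqαpos habsqα' hstrict hs τ hτs
      have hint : (∫ ω, (if |y ω - x ω * β| ≤ q β then (y ω - x ω * β) ^ 2 else 0) ∂μ)
          = (τ:ℝ) * c₁ := by
        have hgm : Measurable (fun u : ℝ => if |u| ≤ s * qα then u ^ 2 else 0) :=
          Measurable.ite (abs_set_meas (s * qα)) (by fun_prop) measurable_const
        have h1 := integral_map (μ := μ) (φ := fun ω => y ω - x ω * β)
          (f := fun u : ℝ => if |u| ≤ s * qα then u ^ 2 else 0)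
          hrm.aemeasurable (hgm.aestronglyMeasurable)
        simp_rw [hqβ]
        rw [← h1, hmap, scaled_trunc_integral hs τ hτs qα hqαpos.le, ← hc₁int, hτs]
      rw [hf β, hint, hτcoe]
      ring
  -- conclude by soft-thresholding
  intro β
  have hVpos : (0:ℝ) < (V:ℝ) := by exact_mod_cast hV
  have ha : (0:ℝ) < c₁ * (V:ℝ) := mul_pos hc₁pos hVpos
  have hb : (0:ℝ) ≤ α * lam := mul_nonneg hα0.le hlam
  have hdiv : α * lam / (2 * (c₁ * (V:ℝ))) = α * lam / (2 * c₁ * (V:ℝ)) := by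
    ring_nf
  have hst := soft_threshold ha hb β₀ β
  rw [hdiv] at hst
  rw [key β, key (Real.sign β₀ * max (|β₀| - α * lam / (2 * c₁ * (V:ℝ))) 0)]
  nlinarith [hst]
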